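/- Let $\{u^{(1)},\ldots,u^{(n-d)}\}$ be a lattice basis of $\ker_{\mathbb{Z}}(A)$ and let $J = \langle x^{u^{(1)}_+} - x^{u^{(1)}_-},\ \ldots,\ x^{u^{(n-d)}_+} - x^{u^{(n-d)}_-} \rangle \subset \mathbb{C}[x_1,\ldots,x_n]$. Then the toric ideal satisfies $I_A = J : (x_1 x_2 \cdots x_n)^{\infty}$, and moreover this saturation can be computed one variable at a time: $I_A = ((\cdots((J : x_1^{\infty}) : x_2^{\infty})\cdots) : x_n^{\infty})$. -/

import Mathlib

open MvPolynomial

noncomputable section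

universe u

variable {α β : Type*} [Fintype α] [Fintype β]

/-- The Laurent monomial `t^a` in the group algebra `ℂ[ℤ^α]` (the Laurent polynomial ring). -/
def laurentMonomial (a : α → ℤ) : AddMonoidAlgebra ℂ (α →₀ ℤ) :=
  AddMonoidAlgebra.single (Finsupp.equivFunOnFinite.symm a) 1

/-- The monomial map `φ_A : x_j ↦ t^{a_j}` where `a_j` is the `j`-th column of `A`. -/
def phiMap (A : Matrix α β ℤ) : MvPolynomial β ℂ →ₐ[ℂ] AddMonoidAlgebra ℂ (α →₀ ℤ) :=
  MvPolynomial.aeval fun j => laurentMonomial fun i => A i j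

/-- The toric ideal `I_A`, the kernel of `φ_A`. -/
def toricIdeal (A : Matrix α β ℤ) : Ideal (MvPolynomial β ℂ) :=
  RingHom.ker (phiMap A).toRingHom

/-- The leading monomial (exponent vector) of `f` with respect to a monomial order. -/
def leadMon (m : MonomialOrder β) (f : MvPolynomial β ℂ) : β →₀ ℕ :=
  m.toSyn.symm (f.support.sup m.toSyn)

/-- The leading coefficient of `f` with respect to a monomial order. -/
def leadCoeff (m : MonomialOrder β) (f : MvPolynomial β ℂ) : ℂ := f.coeff (leadMon m f)

/-- `G` is a Gröbner basis of `I`: a finite set of nonzero elements of `I` whose leading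
monomials generate the initial ideal of `I` (i.e. the leading monomial of every nonzero
element of `I` is divisible by the leading monomial of some element of `G`). -/
def IsGroebnerBasis (m : MonomialOrder β) (I : Ideal (MvPolynomial β ℂ))
    (G : Set (MvPolynomial β ℂ)) : Prop :=
  G.Finite ∧ (∀ g ∈ G, g ∈ I ∧ g ≠ 0) ∧
    ∀ f ∈ I, f ≠ 0 → ∃ g ∈ G, leadMon m g ≤ leadMon m f

/-- `G` is the reduced Gröbner basis of `I`: a Gröbner basis, all of whose elements are monic,
such that no monomial occurring in an element of `G` is divisible by the leading monomial of
another element of `G`. -/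
def IsReducedGroebnerBasis (m : MonomialOrder β) (I : Ideal (MvPolynomial β ℂ))
    (G : Set (MvPolynomial β ℂ)) : Prop :=
  IsGroebnerBasis m I G ∧ (∀ g ∈ G, leadCoeff m g = 1) ∧
    ∀ g ∈ G, ∀ g' ∈ G, g' ≠ g → ∀ c ∈ g.support, ¬ leadMon m g' ≤ c

/-- The positive part `w⁺` of an integer vector, as an exponent vector. -/
def posPart (w : β → ℤ) : β →₀ ℕ := Finsupp.equivFunOnFinite.symm fun i => (w i).toNat

/-- The negative part `w⁻` of an integer vector, as an exponent vector. -/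
def negPart (w : β → ℤ) : β →₀ ℕ := Finsupp.equivFunOnFinite.symm fun i => (-(w i)).toNat

/-- The binomial `x^{w⁺} - x^{w⁻}` associated to an integer vector `w`. -/
def binom (w : β → ℤ) : MvPolynomial β ℂ := monomial (posPart w) 1 - monomial (negPart w) 1

/-- A circuit of `A`: a nonzero integer vector in `ker A` with coprime entries whose support
is minimal with respect to inclusion among supports of nonzero elements of `ker A`. -/
def IsCircuit (A : Matrix α β ℤ) (u : β → ℤ) : Prop :=
  u ≠ 0 ∧ A.mulVec u = 0 ∧ Finset.gcd Finset.univ u = 1 ∧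
    ∀ v : β → ℤ, v ≠ 0 → A.mulVec v = 0 →
      {i | v i ≠ 0} ⊆ {i | u i ≠ 0} → {i | v i ≠ 0} = {i | u i ≠ 0}

/-- A sign pattern `ρ ∈ {+1,-1}^n`. -/
def IsSignPattern (ρ : β → ℤ) : Prop := ∀ i, ρ i = 1 ∨ ρ i = -1

/-- Membership in `H_ρ = ℝ^n_ρ ∩ ker_ℤ(A)`: integer kernel elements conforming to the sign
pattern `ρ`. -/
def MemH (A : Matrix α β ℤ) (ρ : β → ℤ) (w : β → ℤ) : Prop :=
  A.mulVec w = 0 ∧ ∀ i, 0 ≤ ρ i * w i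

/-- `w` belongs to the Hilbert basis of the pointed cone `H_ρ`: it is a nonzero element of
`H_ρ` which cannot be written as the sum of two nonzero elements of `H_ρ` (equivalently, it
belongs to the unique minimal generating set of the monoid `H_ρ`). -/
def IsHilbertBasisElem (A : Matrix α β ℤ) (ρ : β → ℤ) (w : β → ℤ) : Prop :=
  MemH A ρ w ∧ w ≠ 0 ∧
    ¬ ∃ a b : β → ℤ, MemH A ρ a ∧ MemH A ρ b ∧ a ≠ 0 ∧ b ≠ 0 ∧ w = a + b

/-- `w` is a Graver basis vector of `A`: a member of the Hilbert basis of `H_ρ` for some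
sign pattern `ρ`. -/
def IsGraverVector (A : Matrix α β ℤ) (w : β → ℤ) : Prop :=
  ∃ ρ : β → ℤ, IsSignPattern ρ ∧ IsHilbertBasisElem A ρ w

/-- The Graver basis `Gr_A` of the toric ideal `I_A`, as a set of binomials. -/
def graverBasis (A : Matrix α β ℤ) : Set (MvPolynomial β ℂ) :=
  { p | ∃ w : β → ℤ, IsGraverVector A w ∧ p = binom w }

/-- The degree of the binomial `x^{w⁺} - x^{w⁻}`, namely `max(Σ w⁺, Σ w⁻)`. -/
def degZ (w : β → ℤ) : ℕ := max (∑ i, (w i).toNat) (∑ i, (-(w i)).toNat)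

/-- The columns of `A` generate a pointed cone. -/
def PointedCone' (A : Matrix α β ℤ) : Prop :=
  ∀ c : β → ℚ, (∀ i, 0 ≤ c i) → (A.map (Int.cast : ℤ → ℚ)).mulVec c = 0 → c = 0

/-- The row span of `A` contains the all-ones vector. -/
def RowSpanOne (A : Matrix α β ℤ) : Prop :=
  ∃ w : α → ℚ, (A.map (Int.cast : ℤ → ℚ)).vecMul w = fun _ => 1

/-- The universal Gröbner basis of an ideal: the union of its reduced Gröbner bases over
all term orders. -/
def universalGroebnerBasis {γ : Type u} [Fintype γ] (I : Ideal (MvPolynomial γ ℂ)) :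
    Set (MvPolynomial γ ℂ) :=
  { p | ∃ (m : MonomialOrder.{u, u} γ) (G : Set (MvPolynomial γ ℂ)),
      IsReducedGroebnerBasis m I G ∧ p ∈ G }

/-- The initial ideal of `I` with respect to a monomial order: the monomial ideal generated by
the leading monomials of the nonzero elements of `I`. -/
def initialIdeal (m : MonomialOrder β) (I : Ideal (MvPolynomial β ℂ)) :
    Ideal (MvPolynomial β ℂ) :=
  Ideal.span { p | ∃ f ∈ I, f ≠ 0 ∧ p = monomial (leadMon m f) (1 : ℂ) }

/-- The saturation `J : f^∞ = {g : f^k g ∈ J for some k ≥ 0}` of an ideal. -/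
def satIdeal {R : Type*} [CommRing R] (J : Ideal R) (f : R) : Ideal R where
  carrier := { g | ∃ k : ℕ, f ^ k * g ∈ J }
  zero_mem' := ⟨0, by simp⟩
  add_mem' := by
    rintro a b ⟨k, hk⟩ ⟨l, hl⟩
    refine ⟨k + l, ?_⟩
    have h1 : f ^ (k + l) * (a + b) = f ^ l * (f ^ k * a) + f ^ k * (f ^ l * b) := by ring
    rw [h1]
    exact Ideal.add_mem _ (Ideal.mul_mem_left _ _ hk) (Ideal.mul_mem_left _ _ hl)
  smul_mem' := by
    rintro c a ⟨k, hk⟩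
    refine ⟨k, ?_⟩
    have h1 : f ^ k * (c • a) = c * (f ^ k * a) := by
      simp only [smul_eq_mul]; ring
    rw [h1]
    exact Ideal.mul_mem_left _ _ hk

namespace ToricAux

open MvPolynomial

set_option linter.unusedSectionVars false

variable {α β : Type*} [Fintype α] [Fintype β]

lemma symm_add (a b : β → ℤ) :
    Finsupp.equivFunOnFinite.symm (a + b) =
      Finsupp.equivFunOnFinite.symm a + Finsupp.equivFunOnFinite.symm b := by
  ext i
  simp [Finsupp.add_apply]

lemma laurent_mul (a b : α → ℤ) :
    laurentMonomial (α := α) a * laurentMonomial b = laurentMonomial (a + b) := by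
  show (AddMonoidAlgebra.single _ _ : AddMonoidAlgebra ℂ (α →₀ ℤ)) * AddMonoidAlgebra.single _ _ = AddMonoidAlgebra.single _ _
  rw [AddMonoidAlgebra.single_mul_single, one_mul, symm_add]

lemma laurent_one : laurentMonomial (α := α) 0 = 1 := by
  show (AddMonoidAlgebra.single _ _ : AddMonoidAlgebra ℂ (α →₀ ℤ)) = 1
  rw [AddMonoidAlgebra.one_def]
  congr 1
  ext i; simp

lemma laurent_pow (a : α → ℤ) (k : ℕ) :
    laurentMonomial (α := α) a ^ k = laurentMonomial ((k : ℤ) • a) := by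
  induction k with
  | zero => rw [pow_zero]; rw [show ((0:ℕ):ℤ) • a = 0 by simp]; exact laurent_one.symm
  | succ k ih =>
      rw [pow_succ, ih, laurent_mul]
      congr 1
      funext i
      simp only [Pi.smul_apply, Pi.add_apply, smul_eq_mul]
      push_cast
      ring

lemma laurent_ne_zero (a : α → ℤ) : laurentMonomial (α := α) a ≠ 0 := by
  intro h
  exact one_ne_zero (AddMonoidAlgebra.single_eq_zero.mp h)

lemma prod_laurent (s : Finset β) (g : β → (α → ℤ)) :
    (∏ j ∈ s, laurentMonomial (g j)) = laurentMonomial (∑ j ∈ s, g j) := by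
  classical
  induction s using Finset.cons_induction with
  | empty => simpa using laurent_one.symm
  | cons j s hj ih => rw [Finset.prod_cons, Finset.sum_cons, ih, laurent_mul]

/-- exponent vector as integer vector -/
def expI (e : β →₀ ℕ) : β → ℤ := fun j => (e j : ℤ)

lemma phi_monomial (A : Matrix α β ℤ) (e : β →₀ ℕ) (c : ℂ) :
    phiMap A (monomial e c) =
      AddMonoidAlgebra.single (Finsupp.equivFunOnFinite.symm (A.mulVec (expI e))) c := by
  rw [phiMap, aeval_monomial, Finsupp.prod_fintype _ _ (fun i => pow_zero _)]
  simp_rw [laurent_pow]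
  rw [prod_laurent]
  show (AddMonoidAlgebra.single _ _ : AddMonoidAlgebra ℂ (α →₀ ℤ)) * AddMonoidAlgebra.single _ _ = AddMonoidAlgebra.single _ _
  rw [AddMonoidAlgebra.single_mul_single, zero_add, mul_one]
  congr 2
  funext i
  simp only [Matrix.mulVec, dotProduct, Finset.sum_apply, Pi.smul_apply, smul_eq_mul, expI]
  exact Finset.sum_congr rfl fun j _ => mul_comm _ _

lemma phi_as_sum (A : Matrix α β ℤ) (f : MvPolynomial β ℂ) :
    phiMap A f = ∑ e ∈ f.support,
      (AddMonoidAlgebra.single (Finsupp.equivFunOnFinite.symm (A.mulVec (expI e))) (f.coeff e)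
        : AddMonoidAlgebra ℂ (α →₀ ℤ)) := by
  conv_lhs => rw [f.as_sum, map_sum]
  exact Finset.sum_congr rfl fun e he => phi_monomial A e (f.coeff e)

end ToricAux

namespace ToricAux
set_option linter.unusedSectionVars false

lemma mem_satIdeal {R : Type*} [CommRing R] {J : Ideal R} {f g : R} :
    g ∈ satIdeal J f ↔ ∃ k : ℕ, f ^ k * g ∈ J := Iff.rfl

lemma le_satIdeal {R : Type*} [CommRing R] (J : Ideal R) (f : R) : J ≤ satIdeal J f :=
  fun g hg => ⟨0, by simpa using hg⟩

lemma satIdeal_mono {R : Type*} [CommRing R] {I I' : Ideal R} (h : I ≤ I') (f : R) :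
    satIdeal I f ≤ satIdeal I' f := by
  rintro g ⟨k, hk⟩
  exact ⟨k, h hk⟩

/-- the pinned `posPart`, disambiguated -/
def pP (w : β → ℤ) : β →₀ ℕ := posPart w
/-- the pinned `negPart`, disambiguated -/
def nP (w : β → ℤ) : β →₀ ℕ := negPart w

lemma pP_apply (w : β → ℤ) (j : β) : pP w j = (w j).toNat := rfl
lemma nP_apply (w : β → ℤ) (j : β) : nP w j = (-(w j)).toNat := rfl

lemma binom_eq (w : β → ℤ) : binom (β := β) w = monomial (pP w) 1 - monomial (nP w) 1 := rfl

lemma binom_zero : binom (0 : β → ℤ) = 0 := by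
  have h : pP (0 : β → ℤ) = nP (0 : β → ℤ) := by
    ext j; simp [pP_apply, nP_apply]
  rw [binom_eq, h, sub_self]

lemma binom_neg (v : β → ℤ) : binom (-v) = -(binom v) := by
  have h1 : pP (-v) = nP v := by
    ext j; simp [pP_apply, nP_apply]
  have h2 : nP (-v) = pP v := by
    ext j; simp [pP_apply, nP_apply]
  rw [binom_eq, binom_eq, h1, h2]
  ring

lemma prod_monomial {γ : Type*} (s : Finset γ) (g : γ → (β →₀ ℕ)) :
    ∏ j ∈ s, (monomial (g j) (1:ℂ)) = monomial (∑ j ∈ s, g j) 1 := by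
  classical
  induction s using Finset.cons_induction with
  | empty => simp
  | cons j s hj ih => rw [Finset.prod_cons, Finset.sum_cons, ih, monomial_mul, one_mul]

lemma prod_X_pow (M : ℕ) :
    (∏ i : β, (X i : MvPolynomial β ℂ)) ^ M = monomial (∑ i : β, Finsupp.single i M) 1 := by
  rw [← Finset.prod_pow]
  simp_rw [X_pow_eq_monomial]
  exact prod_monomial _ _

lemma monomial_mul_mem_sat {J : Ideal (MvPolynomial β ℂ)} {g : MvPolynomial β ℂ}
    (e : β →₀ ℕ) (h : monomial e 1 * g ∈ satIdeal J (∏ i : β, X i)) :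
    g ∈ satIdeal J (∏ i : β, X i) := by
  classical
  obtain ⟨k, hk⟩ := h
  set M : ℕ := ∑ i : β, e i with hM
  have hle : ∀ j, e j ≤ M := by
    intro j
    exact Finset.single_le_sum (f := fun i => e i) (fun i _ => Nat.zero_le _) (Finset.mem_univ j)
  set τ : β →₀ ℕ := ∑ i : β, Finsupp.single i M with hτ
  have hτapp : ∀ j, τ j = M := by
    intro j
    rw [hτ, Finsupp.finset_sum_apply]
    rw [Finset.sum_eq_single j (fun i _ hne => Finsupp.single_eq_of_ne' hne)
      (fun h => absurd (Finset.mem_univ j) h)]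
    exact Finsupp.single_eq_same
  have hre : (τ - e) + e = τ := by
    ext j
    rw [Finsupp.add_apply, Finsupp.tsub_apply, hτapp]
    have := hle j
    omega
  refine ⟨k + M, ?_⟩
  have key : (∏ i : β, (X i : MvPolynomial β ℂ)) ^ (k + M) * g
      = monomial (τ - e) 1 * ((∏ i : β, (X i : MvPolynomial β ℂ)) ^ k * (monomial e 1 * g)) := by
    rw [pow_add, prod_X_pow M, ← hτ]
    rw [show (monomial (τ - e) (1:ℂ)) * ((∏ i : β, (X i : MvPolynomial β ℂ)) ^ k * (monomial e 1 * g))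
        = ((monomial (τ - e) 1 * monomial e 1) * ((∏ i : β, (X i : MvPolynomial β ℂ)) ^ k * g)) by ring]
    rw [monomial_mul, one_mul, hre]
    ring
  rw [key]
  exact Ideal.mul_mem_left _ _ hk

lemma binom_add_identity (v w : β → ℤ) :
    ∃ m : β →₀ ℕ, monomial m 1 * binom (v + w)
      = monomial (pP w) 1 * binom v + monomial (nP v) 1 * binom w := by
  refine ⟨pP v + pP w - pP (v + w), ?_⟩
  have h1 : (pP v + pP w - pP (v+w)) + pP (v+w) = pP v + pP w := by
    ext j
    simp only [Finsupp.add_apply, Finsupp.tsub_apply, pP_apply, Pi.add_apply]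
    omega
  have h2 : (pP v + pP w - pP (v+w)) + nP (v+w) = nP v + nP w := by
    ext j
    simp only [Finsupp.add_apply, Finsupp.tsub_apply, pP_apply, nP_apply, Pi.add_apply]
    omega
  simp only [binom_eq, mul_sub, monomial_mul, one_mul, mul_one]
  rw [h1, h2, add_comm (pP w) (pP v), add_comm (pP w) (nP v)]
  ring

lemma monomial_sub_mem {K : Ideal (MvPolynomial β ℂ)} (e0 e1 : β →₀ ℕ)
    (h : binom (expI e0 - expI e1) ∈ K) :
    monomial e0 1 - monomial e1 1 ∈ K := by
  set v : β → ℤ := expI e0 - expI e1 with hv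
  have hvapp : ∀ j, v j = (e0 j : ℤ) - (e1 j : ℤ) := fun j => rfl
  set m : β →₀ ℕ := e0 - pP v with hm
  have h1 : m + pP v = e0 := by
    ext j
    simp only [Finsupp.add_apply, Finsupp.tsub_apply, pP_apply, hm, hvapp]
    omega
  have h2 : m + nP v = e1 := by
    ext j
    simp only [Finsupp.add_apply, Finsupp.tsub_apply, pP_apply, nP_apply, hm, hvapp]
    omega
  have key : monomial m 1 * binom v = monomial e0 1 - monomial e1 1 := by
    rw [binom_eq, mul_sub, monomial_mul, monomial_mul, h1, h2]
    norm_num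
  rw [← key]
  exact Ideal.mul_mem_left _ _ h

end ToricAux

namespace ToricAux

lemma mem_toricIdeal {A : Matrix α β ℤ} {f : MvPolynomial β ℂ} :
    f ∈ toricIdeal A ↔ phiMap A f = 0 := by
  constructor <;> intro h <;> exact h

end ToricAux

open ToricAux

/-- If `{u^{(1)}, …, u^{(n-d)}}` is a lattice basis of `ker_ℤ(A)` and `J` is the
ideal generated by the corresponding binomials, then
`I_A = J : (x_1 ⋯ x_n)^∞ = ((⋯(J : x_1^∞) : x_2^∞ ⋯) : x_n^∞)`. -/
theorem toricIdeal_eq_saturation_of_lattice_basis_ideal (d n : ℕ)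
    (A : Matrix (Fin d) (Fin n) ℤ)
    (hrank : A.rank = d) (hpointed : PointedCone' A) (hrow : RowSpanOne A)
    (u : Fin (n - d) → Fin n → ℤ)
    (hker : ∀ i, A.mulVec (u i) = 0)
    (hbasis : ∀ w : Fin n → ℤ, A.mulVec w = 0 →
      ∃! c : Fin (n - d) → ℤ, w = ∑ i, c i • u i)
    (J : Ideal (MvPolynomial (Fin n) ℂ))
    (hJ : J = Ideal.span { p | ∃ i : Fin (n - d), p = binom (u i) }) :
    toricIdeal A = satIdeal J (∏ i : Fin n, X i) ∧
    toricIdeal A = (List.finRange n).foldl (fun I i => satIdeal I (X i)) J := by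
  classical
  -- φ kills binomials of kernel vectors
  have hphi_binom : ∀ v : Fin n → ℤ, A.mulVec v = 0 → phiMap A (binom v) = 0 := by
    intro v hv
    rw [binom_eq, map_sub, phi_monomial, phi_monomial]
    have hsub : expI (pP v) - expI (nP v) = v := by
      funext j
      show ((v j).toNat : ℤ) - ((-(v j)).toNat : ℤ) = v j
      omega
    have hEq : A.mulVec (expI (pP v)) = A.mulVec (expI (nP v)) := by
      have h1 : A.mulVec (expI (pP v)) - A.mulVec (expI (nP v)) = 0 := by
        rw [← Matrix.mulVec_sub, hsub, hv]
      exact sub_eq_zero.mp h1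
    rw [hEq, sub_self]
  have hJT : J ≤ toricIdeal A := by
    rw [hJ, Ideal.span_le]
    rintro p ⟨i, rfl⟩
    exact mem_toricIdeal.mpr (hphi_binom (u i) (hker i))
  have hsatT : ∀ h g : MvPolynomial (Fin n) ℂ, phiMap A h ≠ 0 →
      h * g ∈ toricIdeal A → g ∈ toricIdeal A := by
    intro h g hh hm
    rw [mem_toricIdeal] at hm ⊢
    rw [map_mul] at hm
    rcases mul_eq_zero.mp hm with h' | h'
    · exact absurd h' hh
    · exact h'
  have hphiX : ∀ i, phiMap A (X i : MvPolynomial (Fin n) ℂ)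
      = laurentMonomial (fun r => A r i) := fun i => aeval_X _ i
  have hphiXne : ∀ i, phiMap A (X i : MvPolynomial (Fin n) ℂ) ≠ 0 := by
    intro i
    rw [hphiX]
    exact laurent_ne_zero _
  have hphiPne : ∀ k : ℕ, phiMap A ((∏ i : Fin n, X i : MvPolynomial (Fin n) ℂ) ^ k) ≠ 0 := by
    intro k
    rw [map_pow]
    apply pow_ne_zero
    rw [map_prod]
    simp_rw [hphiX]
    rw [prod_laurent]
    exact laurent_ne_zero _
  have hKT : satIdeal J (∏ i : Fin n, X i) ≤ toricIdeal A := by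
    rintro g ⟨k, hk⟩
    exact hsatT _ g (hphiPne k) (hJT hk)
  -- closure properties of { v | binom v ∈ satIdeal J Π }
  have hbin_add : ∀ v w : Fin n → ℤ, binom v ∈ satIdeal J (∏ i : Fin n, X i) →
      binom w ∈ satIdeal J (∏ i : Fin n, X i) →
      binom (v + w) ∈ satIdeal J (∏ i : Fin n, X i) := by
    intro v w hv hw
    obtain ⟨m, hm⟩ := binom_add_identity v w
    refine monomial_mul_mem_sat m ?_
    rw [hm]
    exact Ideal.add_mem _ (Ideal.mul_mem_left _ _ hv) (Ideal.mul_mem_left _ _ hw)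
  have hbin_zero : binom (0 : Fin n → ℤ) ∈ satIdeal J (∏ i : Fin n, X i) := by
    rw [binom_zero]
    exact Ideal.zero_mem _
  have hbin_neg : ∀ v : Fin n → ℤ, binom v ∈ satIdeal J (∏ i : Fin n, X i) →
      binom (-v) ∈ satIdeal J (∏ i : Fin n, X i) := by
    intro v hv
    rw [binom_neg]
    exact neg_mem hv
  have hbin_smul : ∀ (cz : ℤ) (v : Fin n → ℤ), binom v ∈ satIdeal J (∏ i : Fin n, X i) →
      binom (cz • v) ∈ satIdeal J (∏ i : Fin n, X i) := by
    intro cz v hv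
    induction cz using Int.induction_on with
    | zero => rw [zero_smul]; exact hbin_zero
    | succ k ihk =>
        rw [show ((k : ℤ) + 1) • v = (k : ℤ) • v + v from by rw [add_smul, one_smul]]
        exact hbin_add _ _ ihk hv
    | pred k ihk =>
        rw [show (-(k : ℤ) - 1) • v = (-(k : ℤ)) • v + (-v) from by
          rw [sub_smul, one_smul, sub_eq_add_neg]]
        exact hbin_add _ _ ihk (hbin_neg v hv)
  have hbinGen : ∀ j, binom (u j) ∈ satIdeal J (∏ i : Fin n, X i) := by
    intro j
    apply le_satIdeal
    rw [hJ]
    exact Ideal.subset_span ⟨j, rfl⟩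
  have hbinK : ∀ v : Fin n → ℤ, A.mulVec v = 0 → binom v ∈ satIdeal J (∏ i : Fin n, X i) := by
    intro v hv
    obtain ⟨c, hc, -⟩ := hbasis v hv
    rw [hc]
    have : ∀ s : Finset (Fin (n - d)),
        binom (∑ i ∈ s, c i • u i) ∈ satIdeal J (∏ i : Fin n, X i) := by
      intro s
      induction s using Finset.cons_induction with
      | empty => rw [Finset.sum_empty]; exact hbin_zero
      | cons j s hj ihs =>
          rw [Finset.sum_cons]
          exact hbin_add _ _ (hbin_smul _ _ (hbinGen j)) ihs
    exact this Finset.univ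
  have hmono : ∀ e0 e1 : Fin n →₀ ℕ, A.mulVec (expI e0) = A.mulVec (expI e1) →
      monomial e0 1 - monomial e1 1 ∈ satIdeal J (∏ i : Fin n, X i) := by
    intro e0 e1 h
    apply monomial_sub_mem
    apply hbinK
    rw [Matrix.mulVec_sub, h, sub_self]
  -- main induction
  have hmain : ∀ N : ℕ, ∀ f : MvPolynomial (Fin n) ℂ, f.support.card ≤ N →
      phiMap A f = 0 → f ∈ satIdeal J (∏ i : Fin n, X i) := by
    intro N
    induction N with
    | zero =>
        intro f hcard hf
        have hf0 : f = 0 := by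
          rw [← MvPolynomial.support_eq_empty, ← Finset.card_eq_zero]
          omega
        rw [hf0]
        exact Ideal.zero_mem _
    | succ N ih =>
        intro f hcard hf
        by_cases hf0 : f = 0
        · rw [hf0]; exact Ideal.zero_mem _
        obtain ⟨e0, he0⟩ : f.support.Nonempty :=
          Finset.nonempty_iff_ne_empty.mpr fun h => hf0 (MvPolynomial.support_eq_empty.mp h)
        have happ : (∑ e ∈ f.support,
            (AddMonoidAlgebra.single (Finsupp.equivFunOnFinite.symm (A.mulVec (expI e))) (f.coeff e)
              : AddMonoidAlgebra ℂ (Fin d →₀ ℤ))) = 0 := (phi_as_sum A f).symm.trans hf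
        have hsum0 := DFunLike.congr_fun (congrArg AddMonoidAlgebra.coeff happ) (Finsupp.equivFunOnFinite.symm (A.mulVec (expI e0)))
        rw [AddMonoidAlgebra.coeff_sum, Finsupp.finset_sum_apply] at hsum0
        have hexists : ∃ e1 ∈ f.support, e1 ≠ e0 ∧
            A.mulVec (expI e1) = A.mulVec (expI e0) := by
          by_contra hcon
          push_neg at hcon
          have hz : ∀ e ∈ f.support, e ≠ e0 →
              (AddMonoidAlgebra.single (Finsupp.equivFunOnFinite.symm (A.mulVec (expI e))) (f.coeff e)
                : AddMonoidAlgebra ℂ (Fin d →₀ ℤ)).coeff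
                (Finsupp.equivFunOnFinite.symm (A.mulVec (expI e0))) = 0 := by
            intro e he hne
            refine Finsupp.single_eq_of_ne' ?_
            intro hEq
            exact hcon e he hne (Finsupp.equivFunOnFinite.symm.injective hEq)
          rw [Finset.sum_eq_single e0 hz (fun h => absurd he0 h)] at hsum0
          rw [AddMonoidAlgebra.coeff_single, Finsupp.single_eq_same] at hsum0
          exact (MvPolynomial.mem_support_iff.mp he0) (by simpa using hsum0)
        obtain ⟨e1, he1, hne, heq⟩ := hexists
        set c : ℂ := f.coeff e0 with hcdef
        set b : MvPolynomial (Fin n) ℂ := monomial e0 1 - monomial e1 1 with hb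
        have hbK : b ∈ satIdeal J (∏ i : Fin n, X i) := hmono e0 e1 heq.symm
        have hbphi : phiMap A b = 0 := by
          rw [hb, map_sub, phi_monomial, phi_monomial,
            show A.mulVec (expI e0) = A.mulVec (expI e1) from heq.symm, sub_self]
        set g : MvPolynomial (Fin n) ℂ := f - C c * b with hg
        have hgphi : phiMap A g = 0 := by
          rw [hg, map_sub, map_mul, hf, hbphi, mul_zero, sub_zero]
        have hgsupp : g.support ⊆ f.support.erase e0 := by
          intro e he
          rw [Finset.mem_erase]
          have hcoeff : g.coeff e = f.coeff e
              - c * ((if e0 = e then (1:ℂ) else 0) - (if e1 = e then (1:ℂ) else 0)) := by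
            rw [hg, hb]
            simp [MvPolynomial.coeff_sub, MvPolynomial.coeff_C_mul, MvPolynomial.coeff_monomial]
          have hne' := MvPolynomial.mem_support_iff.mp he
          constructor
          · intro hEq
            subst hEq
            rw [hcoeff, if_pos rfl, if_neg hne] at hne'
            simp [hcdef] at hne'
          · by_contra hnot
            have hee0 : e ≠ e0 := fun h => hnot (h ▸ he0)
            have hee1 : e ≠ e1 := fun h => hnot (h ▸ he1)
            have hfe : f.coeff e = 0 := MvPolynomial.notMem_support_iff.mp hnot
            rw [hcoeff, hfe, if_neg (fun h => hee0 h.symm), if_neg (fun h => hee1 h.symm)] at hne'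
            simp at hne'
        have hgcard : g.support.card ≤ N := by
          have h1 := Finset.card_le_card hgsupp
          rw [Finset.card_erase_of_mem he0] at h1
          have h2 : 1 ≤ f.support.card := Finset.card_pos.mpr ⟨e0, he0⟩
          omega
        have hgK := ih g hgcard hgphi
        have hfgb : f = g + C c * b := by rw [hg]; ring
        rw [hfgb]
        exact Ideal.add_mem _ hgK (Ideal.mul_mem_left _ _ hbK)
  have hTK : toricIdeal A ≤ satIdeal J (∏ i : Fin n, X i) :=
    fun f hf => hmain _ f le_rfl (mem_toricIdeal.mp hf)
  have hfirst : toricIdeal A = satIdeal J (∏ i : Fin n, X i) := le_antisymm hTK hKT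
  refine ⟨hfirst, ?_⟩
  -- second equality
  have hTsatX : ∀ i : Fin n, satIdeal (toricIdeal A) (X i) ≤ toricIdeal A := by
    rintro i g ⟨k, hk⟩
    refine hsatT _ _ ?_ hk
    rw [map_pow]
    exact pow_ne_zero _ (hphiXne i)
  have h2a : ∀ (l : List (Fin n)) (I : Ideal (MvPolynomial (Fin n) ℂ)), I ≤ toricIdeal A →
      l.foldl (fun I i => satIdeal I (X i)) I ≤ toricIdeal A := by
    intro l
    induction l with
    | nil => intro I h; simpa using h
    | cons i t ih =>
        intro I h
        exact ih _ (le_trans (satIdeal_mono h (X i)) (hTsatX i))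
  have h2b : ∀ (l : List (Fin n)) (I : Ideal (MvPolynomial (Fin n) ℂ))
      (g : MvPolynomial (Fin n) ℂ) (k : ℕ),
      ((l.map X).prod) ^ k * g ∈ I → g ∈ l.foldl (fun I i => satIdeal I (X i)) I := by
    intro l
    induction l with
    | nil => intro I g k h; simpa using h
    | cons i t ih =>
        intro I g k h
        show g ∈ t.foldl _ (satIdeal I (X i))
        apply ih
        refine ⟨k, ?_⟩
        have hcalc : (X i : MvPolynomial (Fin n) ℂ) ^ k * (((t.map X).prod) ^ k * g)
            = (((i :: t).map X).prod) ^ k * g := by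
          rw [List.map_cons, List.prod_cons, mul_pow]
          ring
        rw [hcalc]
        exact h
  apply le_antisymm
  · intro g hg
    obtain ⟨k, hk⟩ := hTK hg
    apply h2b (List.finRange n) J g k
    rw [← Fin.prod_univ_def]
    exact hk
  · exact h2a _ J hJT
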